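/- (No separable counterexample in dimension 3) Let V(r, z) = ψ₁(|r|) ψ₂(z) be a C¹ function on ℝ³ (r ∈ ℝ², z ∈ ℝ) satisfying: V(r, z) = 0 for all z ≤ 0; |∇V(r, z)| ≤ 1 for all r ≠ 0 and z; and r · ∇_r V(r, z) ≥ c (∂_z V(r, z))² for some c > 0 and all r ≠ 0, z. Then V ≡ 0. -/

import Mathlib

open MeasureTheory Real RealInnerProductSpace

open Set Topology Filter in
private lemma riccati_no_pos' (φ φd : ℝ → ℝ) (γ : ℝ) (hγ : 0 < γ)
    (hd : ∀ ρ > 0, HasDerivAt φ (φd ρ) ρ)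
    (hineq : ∀ ρ > 0, γ * φ ρ ^ 2 ≤ ρ * φd ρ)
    (ρ₀ : ℝ) (hρ₀ : 0 < ρ₀) (hpos : 0 < φ ρ₀) : False := by
  have hφd_nonneg : ∀ ρ > 0, 0 ≤ φd ρ := by
    intro ρ hρ
    have h := hineq ρ hρ
    nlinarith [sq_nonneg (φ ρ)]
  have hmono : MonotoneOn φ (Ici ρ₀) := by
    apply monotoneOn_of_deriv_nonneg (convex_Ici ρ₀)
    · intro x hx
      exact ((hd x (hρ₀.trans_le hx)).differentiableAt).continuousAt.continuousWithinAt
    · intro x hx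
      rw [interior_Ici] at hx
      exact ((hd x (hρ₀.trans hx)).differentiableAt).differentiableWithinAt
    · intro x hx
      rw [interior_Ici] at hx
      rw [(hd x (hρ₀.trans hx)).deriv]
      exact hφd_nonneg x (hρ₀.trans hx)
  set a := φ ρ₀ with ha
  have hφpos : ∀ x ∈ Ici ρ₀, a ≤ φ x := fun x hx => hmono self_mem_Ici hx hx
  set w : ℝ → ℝ := fun ρ => γ * Real.log ρ + (φ ρ)⁻¹ with hw
  have hwd : ∀ ρ ∈ Ici ρ₀, HasDerivAt w (γ * ρ⁻¹ + -φd ρ / φ ρ ^ 2) ρ := by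
    intro ρ hρ
    have hρpos : (0:ℝ) < ρ := hρ₀.trans_le hρ
    have h1 : HasDerivAt (fun ρ => γ * Real.log ρ) (γ * ρ⁻¹) ρ :=
      (Real.hasDerivAt_log hρpos.ne').const_mul γ
    have h2 : HasDerivAt (fun ρ => (φ ρ)⁻¹) (-φd ρ / φ ρ ^ 2) ρ :=
      (hd ρ hρpos).inv (hpos.trans_le (hφpos ρ hρ)).ne'
    exact h1.add h2
  have hanti : AntitoneOn w (Ici ρ₀) := by
    apply antitoneOn_of_deriv_nonpos (convex_Ici ρ₀)
    · exact fun x hx => (hwd x hx).differentiableAt.continuousAt.continuousWithinAt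
    · intro x hx
      rw [interior_Ici] at hx
      exact (hwd x (mem_Ici.mpr (le_of_lt hx))).differentiableAt.differentiableWithinAt
    · intro x hx
      rw [interior_Ici] at hx
      rw [(hwd x (mem_Ici.mpr (le_of_lt hx))).deriv]
      have hxpos : (0:ℝ) < x := hρ₀.trans hx
      have hφx : 0 < φ x := hpos.trans_le (hφpos x (mem_Ici.mpr (le_of_lt hx)))
      have h := hineq x hxpos
      have hle : γ / x ≤ φd x / φ x ^ 2 := by
        rw [div_le_div_iff₀ hxpos (by positivity)]
        nlinarith
      rw [← div_eq_mul_inv, neg_div]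
      linarith
  -- evaluate at R
  set R := ρ₀ * Real.exp (2 / (γ * a)) with hR
  have hRmem : R ∈ Ici ρ₀ := by
    simp only [mem_Ici, hR]
    nlinarith [Real.one_le_exp (by positivity : (0:ℝ) ≤ 2 / (γ * a))]
  have hwle : w R ≤ w ρ₀ := hanti self_mem_Ici hRmem (by simpa using hRmem)
  have hlogR : Real.log R = Real.log ρ₀ + 2 / (γ * a) := by
    rw [hR, Real.log_mul hρ₀.ne' (Real.exp_pos _).ne', Real.log_exp]
  have hφR : 0 < φ R := hpos.trans_le (hφpos R hRmem)
  have h1 : (0:ℝ) < (φ R)⁻¹ := by positivity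
  have key : γ * (2 / (γ * a)) = 2 / a := by field_simp
  rw [hw] at hwle
  simp only [hlogR] at hwle
  have : 2 / a ≤ a⁻¹ := by nlinarith [hwle]
  rw [div_le_iff₀ hpos, inv_mul_cancel₀ hpos.ne'] at this
  linarith

open Set Topology Filter in
private lemma riccati_no_nonzero' (φ φd : ℝ → ℝ) (γ : ℝ) (hγ : 0 < γ)
    (hd : ∀ ρ > 0, HasDerivAt φ (φd ρ) ρ)
    (hineq : ∀ ρ > 0, γ * φ ρ ^ 2 ≤ ρ * φd ρ)
    (ρ₀ : ℝ) (hρ₀ : 0 < ρ₀) (hne : φ ρ₀ ≠ 0) : False := by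
  rcases hne.lt_or_gt with h | h
  · -- negative case: invert
    have hinv : ρ₀ ^ 2 / ρ₀ = ρ₀ := by field_simp [sq]
    apply riccati_no_pos' (fun ρ => -φ (ρ₀ ^ 2 / ρ)) (fun ρ => φd (ρ₀ ^ 2 / ρ) * (ρ₀ ^ 2 / ρ ^ 2))
      γ hγ ?_ ?_ ρ₀ hρ₀ (by simpa [hinv] using h)
    · intro ρ hρ
      have hσ : 0 < ρ₀ ^ 2 / ρ := by positivity
      have hmap : HasDerivAt (fun ρ : ℝ => ρ₀ ^ 2 / ρ) (ρ₀ ^ 2 * -(ρ ^ 2)⁻¹) ρ := by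
        simpa [div_eq_mul_inv] using (hasDerivAt_inv hρ.ne').const_mul (ρ₀ ^ 2)
      have := (((hd _ hσ).comp ρ hmap)).neg
      exact this.congr_deriv (by ring)
    · intro ρ hρ
      have hσ : 0 < ρ₀ ^ 2 / ρ := by positivity
      have h2 := hineq _ hσ
      have : ρ * (φd (ρ₀ ^ 2 / ρ) * (ρ₀ ^ 2 / ρ ^ 2)) = ρ₀ ^ 2 / ρ * φd (ρ₀ ^ 2 / ρ) := by
        field_simp
      rw [this, neg_pow]
      simpa using h2
  · exact riccati_no_pos' φ φd γ hγ hd hineq ρ₀ hρ₀ h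

open Set Topology Filter in
/-- no separable counterexample in dimension 3. -/
theorem no_separable_counterexample_dim3
    (ψ₁ ψ₂ : ℝ → ℝ) (c : ℝ) (hc : 0 < c)
    (V : EuclideanSpace ℝ (Fin 2) → ℝ → ℝ)
    (hVsep : ∀ r z, V r z = ψ₁ ‖r‖ * ψ₂ z)
    (hC1 : ContDiff ℝ 1 (fun p : EuclideanSpace ℝ (Fin 2) × ℝ => V p.1 p.2))
    (hV0 : ∀ r z, z ≤ 0 → V r z = 0)
    -- (V1) for n = 3: |∇V| ≤ |r|
    (hV1 : ∀ (r : EuclideanSpace ℝ (Fin 2)), r ≠ 0 → ∀ z : ℝ,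
      Real.sqrt (‖gradient (fun r' => V r' z) r‖ ^ 2 + (deriv (V r) z) ^ 2) ≤ ‖r‖)
    -- (V2) for n = 3: r · ∇_r V ≥ c (∂_z V)²
    (hV2 : ∀ (r : EuclideanSpace ℝ (Fin 2)), r ≠ 0 → ∀ z : ℝ,
      c * (deriv (V r) z) ^ 2 ≤ ⟪r, gradient (fun r' => V r' z) r⟫) :
    ∀ r z, V r z = 0 := by
  by_contra hcon
  push_neg at hcon
  obtain ⟨r₀, z₀, hne0⟩ := hcon
  -- basic differentiability
  have hdiff : Differentiable ℝ (fun p : EuclideanSpace ℝ (Fin 2) × ℝ => V p.1 p.2) :=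
    hC1.differentiable one_ne_zero
  have hdr : ∀ z : ℝ, Differentiable ℝ (fun r' => V r' z) := by
    intro z
    exact hdiff.comp (differentiable_id.prodMk (differentiable_const z))
  have hdz : ∀ r, Differentiable ℝ (V r) := by
    intro r
    exact hdiff.comp ((differentiable_const r).prodMk differentiable_id)
  -- unit vector
  set e : EuclideanSpace ℝ (Fin 2) := EuclideanSpace.single (0 : Fin 2) (1 : ℝ) with he
  have hene : ‖e‖ = 1 := by simp [he, EuclideanSpace.norm_single]
  have hnorm : ∀ ρ : ℝ, 0 < ρ → ‖ρ • e‖ = ρ := by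
    intro ρ hρ
    rw [norm_smul, hene, mul_one, Real.norm_eq_abs, abs_of_pos hρ]
  have hsme : ∀ ρ : ℝ, 0 < ρ → (ρ • e) ≠ 0 := by
    intro ρ hρ h0
    have := hnorm ρ hρ
    rw [h0, norm_zero] at this
    exact hρ.ne this
  have hsep' : ∀ ρ : ℝ, 0 < ρ → ∀ z, V (ρ • e) z = ψ₁ ρ * ψ₂ z := by
    intro ρ hρ z
    rw [hVsep, hnorm ρ hρ]
  -- radial derivative
  have hrad : ∀ (ρ z : ℝ),
      HasDerivAt (fun ρ' : ℝ => V (ρ' • e) z) (fderiv ℝ (fun r' => V r' z) (ρ • e) e) ρ := by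
    intro ρ z
    have hf := ((hdr z) (ρ • e)).hasFDerivAt
    have hsm : HasDerivAt (fun ρ' : ℝ => ρ' • e) e ρ := by
      simpa using (hasDerivAt_id ρ).smul_const e
    exact hf.comp_hasDerivAt ρ hsm
  -- hV2 in terms of fderiv
  have hV2' : ∀ ρ : ℝ, 0 < ρ → ∀ z : ℝ,
      c * (deriv (V (ρ • e)) z) ^ 2 ≤ ρ * fderiv ℝ (fun r' => V r' z) (ρ • e) e := by
    intro ρ hρ z
    have h := hV2 (ρ • e) (hsme ρ hρ) z
    have hgrad : ⟪(ρ • e : EuclideanSpace ℝ (Fin 2)),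
        gradient (fun r' => V r' z) (ρ • e)⟫ = ρ * fderiv ℝ (fun r' => V r' z) (ρ • e) e := by
      rw [real_inner_smul_left, real_inner_comm]
      rw [gradient, InnerProductSpace.toDual_symm_apply]
    rwa [hgrad] at h
  -- Step A : find ρ₀ > 0 with V (ρ₀ • e) z₀ ≠ 0
  have hStepA : ∃ ρ₀ : ℝ, 0 < ρ₀ ∧ V (ρ₀ • e) z₀ ≠ 0 := by
    rcases eq_or_lt_of_le (norm_nonneg r₀) with h0 | h0
    · -- r₀ = 0
      have hr0 : r₀ = 0 := by
        rwa [eq_comm, norm_eq_zero] at h0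
      have hG : Continuous (fun ρ : ℝ => V (ρ • e) z₀) :=
        (hdr z₀).continuous.comp (continuous_id.smul continuous_const)
      have h0' : (fun ρ : ℝ => V (ρ • e) z₀) 0 ≠ 0 := by
        simpa [hr0] using hne0
      have hev : ∀ᶠ ρ in 𝓝 (0:ℝ), V (ρ • e) z₀ ≠ 0 :=
        hG.continuousAt.eventually_ne h0'
      obtain ⟨ρ₀, h1, h2⟩ :=
        ((eventually_mem_nhdsWithin (s := Ioi (0:ℝ)) (a := (0:ℝ))).and
          (hev.filter_mono nhdsWithin_le_nhds)).exists
      exact ⟨ρ₀, h1, h2⟩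
    · exact ⟨‖r₀‖, h0, by
        rw [hsep' _ h0, ← hVsep]
        exact hne0⟩
  obtain ⟨ρ₀, hρ₀, hVρ₀⟩ := hStepA
  have hψ₁ : ψ₁ ρ₀ ≠ 0 := by
    intro h; rw [hsep' _ hρ₀, h, zero_mul] at hVρ₀; exact hVρ₀ rfl
  have hψ₂z₀ : ψ₂ z₀ ≠ 0 := by
    intro h; rw [hsep' _ hρ₀, h, mul_zero] at hVρ₀; exact hVρ₀ rfl
  -- ψ₂ vanishes for z ≤ 0
  have hψ₂0 : ∀ z : ℝ, z ≤ 0 → ψ₂ z = 0 := by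
    intro z hz
    have := hV0 (ρ₀ • e) z hz
    rw [hsep' _ hρ₀] at this
    exact (mul_eq_zero.mp this).resolve_left hψ₁
  have hz₀ : 0 < z₀ := by
    by_contra h
    exact hψ₂z₀ (hψ₂0 z₀ (le_of_not_gt h))
  -- Mean value theorem
  set g : ℝ → ℝ := V (ρ₀ • e) with hg
  have hgd : ∀ z, HasDerivAt g (deriv g z) z := fun z => ((hdz (ρ₀ • e)) z).hasDerivAt
  obtain ⟨z₁, hz₁mem, hz₁⟩ := exists_hasDerivAt_eq_slope g (deriv g) hz₀
    ((hdz (ρ₀ • e)).continuous.continuousOn) (fun x _ => hgd x)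
  have hg0 : g 0 = 0 := hV0 _ 0 le_rfl
  have hqne : deriv g z₁ ≠ 0 := by
    rw [hz₁, hg0, sub_zero, sub_zero]
    exact div_ne_zero hVρ₀ hz₀.ne'
  set q := deriv g z₁ with hq
  -- Step E : z-derivative at z₁ for all radii
  have hStepE : ∀ ρ : ℝ, 0 < ρ → deriv (V (ρ • e)) z₁ = (ψ₁ ρ / ψ₁ ρ₀) * q := by
    intro ρ hρ
    have hfun : V (ρ • e) = fun z => (ψ₁ ρ / ψ₁ ρ₀) * g z := by
      funext z
      rw [hsep' _ hρ, hg, hsep' _ hρ₀]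
      field_simp
    rw [hfun, deriv_const_mul _ ((hdz (ρ₀ • e)) z₁)]
  set s := ψ₂ z₁ with hs
  set φ : ℝ → ℝ := fun ρ => V (ρ • e) z₁ with hφ
  set φd : ℝ → ℝ := fun ρ => fderiv ℝ (fun r' => V r' z₁) (ρ • e) e with hφd
  have hdφ : ∀ ρ : ℝ, HasDerivAt φ (φd ρ) ρ := fun ρ => hrad ρ z₁
  have hkey : ∀ ρ : ℝ, 0 < ρ → c * ((ψ₁ ρ / ψ₁ ρ₀) * q) ^ 2 ≤ ρ * φd ρ := by
    intro ρ hρ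
    have := hV2' ρ hρ z₁
    rwa [hStepE ρ hρ] at this
  by_cases hsz : s = 0
  · -- ψ₂ z₁ = 0 : φ ≡ 0, derivative 0, forces ψ₁ ≡ 0 on (0,∞)
    have hφ0 : φ = fun _ => (0:ℝ) := by
      funext ρ
      show V (ρ • e) z₁ = 0
      rw [hVsep, ← hs, hsz, mul_zero]
    have hφd0 : ∀ ρ : ℝ, φd ρ = 0 := by
      intro ρ
      have h1 : HasDerivAt φ 0 ρ := by rw [hφ0]; exact hasDerivAt_const ρ 0
      exact (hdφ ρ).unique h1
    have := hkey ρ₀ hρ₀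
    rw [hφd0, mul_zero, div_self hψ₁, one_mul] at this
    have hq2 : 0 < q ^ 2 := by positivity
    nlinarith
  · -- main case
    set γ := c * q ^ 2 / (ψ₁ ρ₀ ^ 2 * s ^ 2) with hγdef
    have hγpos : 0 < γ := by
      have : 0 < q ^ 2 := by positivity
      have h2 : 0 < ψ₁ ρ₀ ^ 2 * s ^ 2 := by positivity
      positivity
    have hφval : ∀ ρ : ℝ, 0 < ρ → φ ρ = ψ₁ ρ * s := fun ρ hρ => hsep' ρ hρ z₁
    have hineq : ∀ ρ > 0, γ * φ ρ ^ 2 ≤ ρ * φd ρ := by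
      intro ρ hρ
      have h := hkey ρ hρ
      rw [hφval ρ hρ]
      have heq : γ * (ψ₁ ρ * s) ^ 2 = c * ((ψ₁ ρ / ψ₁ ρ₀) * q) ^ 2 := by
        rw [hγdef]; field_simp
      rw [heq]; exact h
    exact riccati_no_nonzero' φ φd γ hγpos (fun ρ _ => hdφ ρ) hineq ρ₀ hρ₀
      (by rw [hφval ρ₀ hρ₀]; exact mul_ne_zero hψ₁ hsz)
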